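/- Let ς > 1, ϱ ∈ [0,1), and ν₀ = √(1 − ((1−ϱ)/ς)²). Define ϑ_min(ν) = ν − √(ν² − 1 + (ς·√(1−ν²) + ϱ)²) for ν ∈ [ν₀, 1]. Then ϑ_min is strictly increasing on [ν₀, 1], ϑ_min(ν₀) = 0, and ϑ_min(1) = 1 − ϱ. -/

import Mathlib

/-- Lemma 3: ϑ_min(ν) is strictly increasing on [ν₀, 1], with
ϑ_min(ν₀) = 0 and ϑ_min(1) = 1 − ϱ. -/
theorem thetaMin_strictMono (ς ϱ : ℝ) (hς : 1 < ς) (hϱ0 : 0 ≤ ϱ) (hϱ1 : ϱ < 1)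
    (ν₀ : ℝ) (hν₀ : ν₀ = Real.sqrt (1 - ((1 - ϱ) / ς) ^ 2))
    (ϑmin : ℝ → ℝ)
    (hϑmin : ∀ ν, ϑmin ν =
      ν - Real.sqrt (ν ^ 2 - 1 + (ς * Real.sqrt (1 - ν ^ 2) + ϱ) ^ 2)) :
    StrictMonoOn ϑmin (Set.Icc ν₀ 1) ∧ ϑmin ν₀ = 0 ∧ ϑmin 1 = 1 - ϱ := by
  have hςpos : (0:ℝ) < ς := by linarith
  have hν₀nn : 0 ≤ ν₀ := hν₀ ▸ Real.sqrt_nonneg _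
  have key : ∀ ν : ℝ, 0 ≤ 1 - ν ^ 2 →
      ν ^ 2 - 1 + (ς * Real.sqrt (1 - ν ^ 2) + ϱ) ^ 2
      = (ς ^ 2 - 1) * (1 - ν ^ 2) + 2 * ς * ϱ * Real.sqrt (1 - ν ^ 2) + ϱ ^ 2 := by
    intro ν hν
    have hs2 : Real.sqrt (1 - ν ^ 2) ^ 2 = 1 - ν ^ 2 := Real.sq_sqrt hν
    linear_combination (ς ^ 2) * hs2
  refine ⟨?_, ?_, ?_⟩
  · -- strict monotonicity
    intro a ha b hb hab
    rw [hϑmin a, hϑmin b]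
    have ha0 : 0 ≤ a := le_trans hν₀nn ha.1
    have hb0 : 0 ≤ b := le_trans ha0 hab.le
    have h1a : 0 ≤ 1 - a ^ 2 := by nlinarith [ha.2]
    have h1b : 0 ≤ 1 - b ^ 2 := by nlinarith [hb.2]
    have hsle : Real.sqrt (1 - b ^ 2) ≤ Real.sqrt (1 - a ^ 2) :=
      Real.sqrt_le_sqrt (by nlinarith)
    have hsb : 0 ≤ Real.sqrt (1 - b ^ 2) := Real.sqrt_nonneg _
    have hgle : b ^ 2 - 1 + (ς * Real.sqrt (1 - b ^ 2) + ϱ) ^ 2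
        ≤ a ^ 2 - 1 + (ς * Real.sqrt (1 - a ^ 2) + ϱ) ^ 2 := by
      rw [key a h1a, key b h1b]
      have hab2 : a ^ 2 ≤ b ^ 2 := by nlinarith
      have h1 : (ς ^ 2 - 1) * (1 - b ^ 2) ≤ (ς ^ 2 - 1) * (1 - a ^ 2) :=
        mul_le_mul_of_nonneg_left (by linarith) (by nlinarith)
      have h2 : 2 * ς * ϱ * Real.sqrt (1 - b ^ 2) ≤ 2 * ς * ϱ * Real.sqrt (1 - a ^ 2) := by
        have : 0 ≤ 2 * ς * ϱ := by positivity
        nlinarith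
      linarith
    have := Real.sqrt_le_sqrt hgle
    linarith
  · -- value at ν₀
    rw [hϑmin ν₀]
    have hr : 0 < (1 - ϱ) / ς := div_pos (by linarith) hςpos
    have hr1 : (1 - ϱ) / ς < 1 := by
      rw [div_lt_one hςpos]; linarith
    have hnn : 0 ≤ 1 - ((1 - ϱ) / ς) ^ 2 := by nlinarith
    have hν₀2 : ν₀ ^ 2 = 1 - ((1 - ϱ) / ς) ^ 2 := by
      rw [hν₀]; exact Real.sq_sqrt hnn
    have h1 : 1 - ν₀ ^ 2 = ((1 - ϱ) / ς) ^ 2 := by linarith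
    have h2 : Real.sqrt (1 - ν₀ ^ 2) = (1 - ϱ) / ς := by
      rw [h1, Real.sqrt_sq hr.le]
    rw [h2]
    have h3 : ς * ((1 - ϱ) / ς) + ϱ = 1 := by
      field_simp
      ring
    rw [h3]
    have h4 : ν₀ ^ 2 - 1 + 1 ^ 2 = ν₀ ^ 2 := by ring
    rw [h4, Real.sqrt_sq hν₀nn]
    ring
  · -- value at 1
    rw [hϑmin 1]
    norm_num
    exact Real.sqrt_sq hϱ0
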